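/- Let c < 0, A₀ ∈ End(V) with J(t) = cosh(√(−c)t)·I − (sinh(√(−c)t)/√(−c))·A₀ invertible for all t ∈ ℝ. If √(−c) is not an eigenvalue of A₀ or −√(−c) is not an eigenvalue of A₀, then S₀·J(t)⁻¹ → 0 as t → +∞ or t → −∞, respectively, for any S₀ ∈ End(V). In particular, if ‖S₀·J(t)⁻¹‖ ≥ ε > 0 for all t ∈ ℝ, then both √(−c) and −√(−c) are eigenvalues of A₀. -/
import Mathlib


open Filter Topology

private lemma stmt17_aux {V : Type*} [NormedAddCommGroup V] [NormedSpace ℝ V]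
    (a m M : ℝ) (ha : 0 < a) (hm : 0 < m)
    (B C : V →L[ℝ] V) (hB : ∀ v, m * ‖v‖ ≤ ‖B v‖) (hC : ∀ v, ‖C v‖ ≤ M * ‖v‖)
    (J : ℝ → (V →L[ℝ] V))
    (hJ : ∀ t, J t = (Real.exp (a * t) / 2) • B + (Real.exp (-(a * t)) / 2) • C)
    (hJinv : ∀ t, IsUnit (J t)) (S₀ : V →L[ℝ] V) :
    Tendsto (fun t => ‖S₀ * Ring.inverse (J t)‖) atTop (𝓝 0) := by
  set r : ℝ → ℝ := fun t => Real.exp (a * t) / 2 * m - Real.exp (-(a * t)) / 2 * M with hr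
  have hat : Tendsto (fun t : ℝ => a * t) atTop atTop := tendsto_id.const_mul_atTop ha
  have hg0 : Tendsto (fun t => Real.exp (-(a * t)) / 2 * M) atTop (𝓝 0) := by
    have h1 : Tendsto (fun t => Real.exp (-(a * t))) atTop (𝓝 0) :=
      Real.tendsto_exp_atBot.comp (tendsto_neg_atTop_atBot.comp hat)
    have := (h1.div_const 2).mul_const M
    simpa using this
  have hrtop : Tendsto r atTop atTop := by
    have h1 : Tendsto (fun t => Real.exp (a * t) / 2 * m) atTop atTop :=
      ((Real.tendsto_exp_atTop.comp hat).atTop_div_const (by norm_num)).atTop_mul_const hm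
    have h2 : ∀ᶠ t in atTop, (-1 : ℝ) ≤ -(Real.exp (-(a * t)) / 2 * M) := by
      filter_upwards [hg0.eventually (ge_mem_nhds (show (0:ℝ) < 1 by norm_num))] with t ht
      linarith [ht]
    have := tendsto_atTop_add_right_of_le' atTop (-1 : ℝ) h1 h2
    simpa [hr, sub_eq_add_neg] using this
  have hrt0 : ∀ᶠ t in atTop, 0 < r t := hrtop.eventually_gt_atTop 0
  have key : ∀ t, 0 < r t → ‖S₀ * Ring.inverse (J t)‖ ≤ ‖S₀‖ * (r t)⁻¹ := by
    intro t hrt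
    have hlow : ∀ v, r t * ‖v‖ ≤ ‖J t v‖ := by
      intro v
      have hJv : J t v = (Real.exp (a * t) / 2) • B v + (Real.exp (-(a * t)) / 2) • C v := by
        rw [hJ t]; simp
      have e1 : (0:ℝ) < Real.exp (a * t) / 2 := by positivity
      have e2 : (0:ℝ) < Real.exp (-(a * t)) / 2 := by positivity
      have h1 : ‖(Real.exp (a * t) / 2) • B v‖ = Real.exp (a * t) / 2 * ‖B v‖ := by
        rw [norm_smul, Real.norm_eq_abs, abs_of_pos e1]
      have h2 : ‖(Real.exp (-(a * t)) / 2) • C v‖ = Real.exp (-(a * t)) / 2 * ‖C v‖ := by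
        rw [norm_smul, Real.norm_eq_abs, abs_of_pos e2]
      have hge : ‖(Real.exp (a * t) / 2) • B v‖ - ‖(Real.exp (-(a * t)) / 2) • C v‖
          ≤ ‖J t v‖ := by
        rw [hJv]
        have := norm_sub_norm_le ((Real.exp (a * t) / 2) • B v)
          (-((Real.exp (-(a * t)) / 2) • C v))
        simpa [sub_neg_eq_add] using this
      have hb := hB v
      have hc := hC v
      have : r t * ‖v‖ ≤ Real.exp (a * t) / 2 * ‖B v‖ - Real.exp (-(a * t)) / 2 * ‖C v‖ := by
        rw [hr]
        have := mul_le_mul_of_nonneg_left hb e1.le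
        have := mul_le_mul_of_nonneg_left hc e2.le
        nlinarith [norm_nonneg v]
      rw [h1, h2] at hge
      exact this.trans hge
    have hinv : ‖Ring.inverse (J t)‖ ≤ (r t)⁻¹ := by
      apply ContinuousLinearMap.opNorm_le_bound _ (inv_nonneg.mpr hrt.le)
      intro w
      have hJw : J t (Ring.inverse (J t) w) = w := by
        have h1 : J t * Ring.inverse (J t) = 1 := Ring.mul_inverse_cancel _ (hJinv t)
        calc J t (Ring.inverse (J t) w) = (J t * Ring.inverse (J t)) w := rfl
          _ = w := by rw [h1]; rfl
      have := hlow (Ring.inverse (J t) w)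
      rw [hJw] at this
      rw [inv_mul_eq_div, le_div_iff₀ hrt]
      linarith
    calc ‖S₀ * Ring.inverse (J t)‖ ≤ ‖S₀‖ * ‖Ring.inverse (J t)‖ := norm_mul_le _ _
      _ ≤ ‖S₀‖ * (r t)⁻¹ := by
        exact mul_le_mul_of_nonneg_left hinv (norm_nonneg _)
  have hglim : Tendsto (fun t => ‖S₀‖ * (r t)⁻¹) atTop (𝓝 0) := by
    have := hrtop.inv_tendsto_atTop.const_mul ‖S₀‖
    simpa using this
  refine squeeze_zero' (Eventually.of_forall fun t => norm_nonneg _) ?_ hglim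
  filter_upwards [hrt0] with t ht using key t ht

private lemma stmt17_inj {V : Type*} [NormedAddCommGroup V] [NormedSpace ℝ V]
    [FiniteDimensional ℝ V] (B : V →L[ℝ] V) (h : Function.Injective B) :
    ∃ m > 0, ∀ v, m * ‖v‖ ≤ ‖B v‖ := by
  obtain ⟨K, hK, hanti⟩ := (B : V →ₗ[ℝ] V).exists_antilipschitzWith
    (LinearMap.ker_eq_bot.mpr h)
  refine ⟨(K : ℝ)⁻¹, by positivity, fun v => ?_⟩
  have := hanti.le_mul_norm (f := fun v => B v) (by simp) v
  rw [inv_mul_le_iff₀ (by positivity)]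
  exact this

/-- for `c < 0` and the Jacobi operator `J` invertible on all of `ℝ`,
if `√(−c)` (resp. `−√(−c)`) is not an eigenvalue of `A₀` then `S₀·J(t)⁻¹ → 0` as
`t → +∞` (resp. `t → −∞`); hence if `‖S₀·J(t)⁻¹‖` is bounded away from zero, both
`±√(−c)` are eigenvalues of `A₀`. -/
theorem stmt_17 {V : Type*} [NormedAddCommGroup V] [NormedSpace ℝ V]
    [FiniteDimensional ℝ V]
    (c : ℝ) (hc : c < 0) (A₀ : V →L[ℝ] V) (J : ℝ → (V →L[ℝ] V))
    (hJdef : ∀ t : ℝ, J t =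
      Real.cosh (Real.sqrt (-c) * t) • (1 : V →L[ℝ] V)
        - (Real.sinh (Real.sqrt (-c) * t) / Real.sqrt (-c)) • A₀)
    (hJinv : ∀ t : ℝ, IsUnit (J t)) :
    (¬ Module.End.HasEigenvalue (A₀ : V →ₗ[ℝ] V) (Real.sqrt (-c)) →
      ∀ S₀ : V →L[ℝ] V,
        Tendsto (fun t => ‖S₀ * Ring.inverse (J t)‖) atTop (𝓝 0)) ∧
    (¬ Module.End.HasEigenvalue (A₀ : V →ₗ[ℝ] V) (-Real.sqrt (-c)) →
      ∀ S₀ : V →L[ℝ] V,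
        Tendsto (fun t => ‖S₀ * Ring.inverse (J t)‖) atBot (𝓝 0)) ∧
    (∀ (S₀ : V →L[ℝ] V) (ε : ℝ), 0 < ε →
      (∀ t : ℝ, ε ≤ ‖S₀ * Ring.inverse (J t)‖) →
      Module.End.HasEigenvalue (A₀ : V →ₗ[ℝ] V) (Real.sqrt (-c)) ∧
        Module.End.HasEigenvalue (A₀ : V →ₗ[ℝ] V) (-Real.sqrt (-c))) := by
  set a : ℝ := Real.sqrt (-c) with ha_def
  have ha : 0 < a := Real.sqrt_pos.mpr (by linarith)
  set B : V →L[ℝ] V := 1 - a⁻¹ • A₀ with hB_def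
  set C : V →L[ℝ] V := 1 + a⁻¹ • A₀ with hC_def
  have hJBC : ∀ t, J t = (Real.exp (a * t) / 2) • B + (Real.exp (-(a * t)) / 2) • C := by
    intro t
    rw [hJdef t, Real.cosh_eq, Real.sinh_eq, hB_def, hC_def]
    ext v
    simp only [ContinuousLinearMap.sub_apply, ContinuousLinearMap.add_apply,
      ContinuousLinearMap.smul_apply, ContinuousLinearMap.one_apply]
    rw [smul_sub, smul_add]
    simp only [smul_smul]
    match_scalars <;> field_simp <;> ring
  -- injectivity from non-eigenvalue
  have hBinj : ¬ Module.End.HasEigenvalue (A₀ : V →ₗ[ℝ] V) a → Function.Injective B := by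
    intro hne
    rw [injective_iff_map_eq_zero]
    intro v hv
    by_contra hv0
    apply hne
    apply Module.End.hasEigenvalue_of_hasEigenvector (x := v)
    refine ⟨Module.End.mem_eigenspace_iff.mpr ?_, hv0⟩
    have h1 : v - a⁻¹ • A₀ v = 0 := by
      simpa [hB_def, ContinuousLinearMap.sub_apply, ContinuousLinearMap.smul_apply] using hv
    have h2 : a⁻¹ • A₀ v = v := by
      have := sub_eq_zero.mp h1; exact this.symm
    have h3 : A₀ v = a • v := by
      calc A₀ v = a • a⁻¹ • A₀ v := by
            rw [smul_smul, mul_inv_cancel₀ ha.ne', one_smul]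
        _ = a • v := by rw [h2]
    exact h3
  have hCinj : ¬ Module.End.HasEigenvalue (A₀ : V →ₗ[ℝ] V) (-a) → Function.Injective C := by
    intro hne
    rw [injective_iff_map_eq_zero]
    intro v hv
    by_contra hv0
    apply hne
    apply Module.End.hasEigenvalue_of_hasEigenvector (x := v)
    refine ⟨Module.End.mem_eigenspace_iff.mpr ?_, hv0⟩
    have h1 : v + a⁻¹ • A₀ v = 0 := by
      simpa [hC_def, ContinuousLinearMap.add_apply, ContinuousLinearMap.smul_apply] using hv
    have h2 : a⁻¹ • A₀ v = -v := by
      have := eq_neg_of_add_eq_zero_right h1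
      linear_combination (norm := module) this
    have h3 : A₀ v = (-a) • v := by
      calc A₀ v = a • a⁻¹ • A₀ v := by
            rw [smul_smul, mul_inv_cancel₀ ha.ne', one_smul]
        _ = a • (-v) := by rw [h2]
        _ = (-a) • v := by rw [neg_smul, smul_neg]
    exact h3
  have part1 : ¬ Module.End.HasEigenvalue (A₀ : V →ₗ[ℝ] V) a →
      ∀ S₀ : V →L[ℝ] V, Tendsto (fun t => ‖S₀ * Ring.inverse (J t)‖) atTop (𝓝 0) := by
    intro hne S₀
    obtain ⟨m, hm, hmB⟩ := stmt17_inj B (hBinj hne)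
    exact stmt17_aux a m ‖C‖ ha hm B C hmB (fun v => C.le_opNorm v) J hJBC hJinv S₀
  have part2 : ¬ Module.End.HasEigenvalue (A₀ : V →ₗ[ℝ] V) (-a) →
      ∀ S₀ : V →L[ℝ] V, Tendsto (fun t => ‖S₀ * Ring.inverse (J t)‖) atBot (𝓝 0) := by
    intro hne S₀
    obtain ⟨m, hm, hmC⟩ := stmt17_inj C (hCinj hne)
    have hJ' : ∀ s : ℝ, J (-s) = (Real.exp (a * s) / 2) • C + (Real.exp (-(a * s)) / 2) • B := by
      intro s
      rw [hJBC (-s)]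
      rw [mul_neg, neg_neg, add_comm]
    have htop : Tendsto (fun s => ‖S₀ * Ring.inverse (J (-s))‖) atTop (𝓝 0) :=
      stmt17_aux a m ‖B‖ ha hm C B hmC (fun v => B.le_opNorm v) (fun s => J (-s)) hJ'
        (fun s => hJinv (-s)) S₀
    have := htop.comp tendsto_neg_atBot_atTop
    simpa [Function.comp_def] using this
  refine ⟨part1, part2, ?_⟩
  intro S₀ ε hε hbd
  constructor
  · by_contra h
    obtain ⟨t, ht⟩ := ((part1 h S₀).eventually (gt_mem_nhds hε)).exists
    exact absurd (hbd t) (not_le.mpr ht)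
  · by_contra h
    obtain ⟨t, ht⟩ := ((part2 h S₀).eventually (gt_mem_nhds hε)).exists
    exact absurd (hbd t) (not_le.mpr ht)
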